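/- Let S be a finite point set in the plane with x = (-1,0), y = (1,0) in S, and let m be a Hamiltonian cycle on S minimal with respect to the lexicographic order on decreasingly-sorted edge-length sequences. Let u_i, u_j (i ≠ j) be distinct points of S \ {x,y} lying in the closed unit disk centered at the origin, and let s_i, s_j be their respective predecessors along the traversal of m starting with the directed edge xy, with s_i, s_j, u_i, u_j, x, y all distinct. Then dist(s_i, s_j) ≥ max(dist(s_i, u_i), dist(s_j, u_j), 2). -/

import Mathlib

open Metric

noncomputable section

/-- A Hamiltonian cycle on the point set `S`: a cyclic ordering (an injection from
`ZMod S.card`, hence a bijection onto `S`) of all points of `S`. -/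
def IsHamCycle (S : Finset (EuclideanSpace ℝ (Fin 2)))
    (c : ZMod S.card → EuclideanSpace ℝ (Fin 2)) : Prop :=
  Function.Injective c ∧ ∀ i, c i ∈ S

/-- The distance sequence of a Hamiltonian cycle: edge lengths sorted decreasingly. -/
def dseq (S : Finset (EuclideanSpace ℝ (Fin 2)))
    (c : ZMod S.card → EuclideanSpace ℝ (Fin 2)) : List ℝ :=
  ((List.finRange S.card).map
    (fun i => dist (c ((i : ℕ) : ZMod S.card)) (c (((i : ℕ) : ZMod S.card) + 1)))).insertionSort
    (· ≥ ·)

/-- `m` is a Hamiltonian cycle on `S` minimizing lexicographically the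
decreasingly-sorted sequence of its edge lengths. -/
def IsMinHamCycle (S : Finset (EuclideanSpace ℝ (Fin 2)))
    (m : ZMod S.card → EuclideanSpace ℝ (Fin 2)) : Prop :=
  IsHamCycle S m ∧ ∀ c, IsHamCycle S c → ¬ List.Lex (· < ·) (dseq S c) (dseq S m)

abbrev E2 := EuclideanSpace ℝ (Fin 2)

/-- the reindexing function for the 3-opt exchange -/
def psifun (a b n : ℕ) (t : ℕ) : ℕ :=
  if t < a - 1 then t + 1 else if t < b - 1 then a + b - 2 - t
  else if t = b - 1 then 0 else n - 1 - t + b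

def efun (n : ℕ) (m : ZMod n → E2) (i₀ : ZMod n) (k : ℕ) : ℝ :=
  dist (m (i₀ + (k : ZMod n))) (m (i₀ + ((k + 1 : ℕ) : ZMod n)))

def cfun (n : ℕ) (m : ZMod n → E2) (i₀ : ZMod n) (a b : ℕ) (z : ZMod n) : E2 :=
  m (i₀ + ((psifun a b n z.val : ℕ) : ZMod n))



lemma lexA : ∀ (l₁ : List ℝ) (l₂ : List ℝ), l₁.Pairwise (· ≥ ·) → l₂.Pairwise (· ≥ ·) →
    ∀ (u A B : Multiset ℝ) (M : ℝ), (l₁ : Multiset ℝ) = u + B → (l₂ : Multiset ℝ) = u + A →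
    M ∈ A → (∀ z ∈ B, z < M) → Multiset.card A = Multiset.card B →
    List.Lex (· < ·) l₁ l₂ := by
  intro l₁
  induction l₁ with
  | nil =>
    intro l₂ _ _ u A B M h1 h2 hM hB hc
    exfalso
    have hcard : Multiset.card u + Multiset.card B = 0 := by
      rw [← Multiset.card_add, ← h1]; simp
    have hB0 : B = 0 := Multiset.card_eq_zero.mp (by omega)
    rw [hB0] at hc; simp at hc
    rw [hc] at hM
    simp at hM
  | cons h₁ t₁ ih =>
    intro l₂ hs₁ hs₂ u A B M h1 h2 hM hB hc
    cases l₂ with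
    | nil =>
      exfalso
      have hcard : Multiset.card u + Multiset.card A = 0 := by
        rw [← Multiset.card_add, ← h2]; simp
      rw [Multiset.card_eq_zero.mp (by omega : Multiset.card A = 0)] at hM
      simp at hM
    | cons h₂ t₂ =>
      have hmax : ∀ z ∈ (h₂ :: t₂ : List ℝ), z ≤ h₂ := by
        intro z hz
        rcases List.mem_cons.mp hz with rfl | hz
        · exact le_refl _
        · exact (List.pairwise_cons.mp hs₂).1 z hz
      have hMle : M ≤ h₂ := by
        apply hmax
        have : M ∈ ((h₂ :: t₂ : List ℝ) : Multiset ℝ) := by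
          rw [h2]; exact Multiset.mem_add.mpr (Or.inr hM)
        simpa using this
      have hmem : h₁ ∈ u + B := by rw [← h1]; simp
      rcases Multiset.mem_add.mp hmem with hu | hb
      · have hle : h₁ ≤ h₂ := by
          apply hmax
          have : h₁ ∈ ((h₂ :: t₂ : List ℝ) : Multiset ℝ) := by
            rw [h2]; exact Multiset.mem_add.mpr (Or.inl hu)
          simpa using this
        rcases lt_or_eq_of_le hle with hlt | heq
        · exact List.Lex.rel hlt
        · subst heq
          apply List.Lex.cons
          apply ih t₂ hs₁.of_cons hs₂.of_cons (u.erase h₁) A B M _ _ hM hB hc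
          · have : ((h₁ :: t₁ : List ℝ) : Multiset ℝ).erase h₁ = (u + B).erase h₁ := by rw [h1]
            simpa [Multiset.erase_add_left_pos _ hu] using this
          · have : ((h₁ :: t₂ : List ℝ) : Multiset ℝ).erase h₁ = (u + A).erase h₁ := by rw [h2]
            simpa [Multiset.erase_add_left_pos _ hu] using this
      · exact List.Lex.rel (lt_of_lt_of_le (hB _ hb) hMle)


lemma map_range_reflect {α : Type*} (f : ℕ → α) (L : ℕ) :
    (Multiset.range L).map f = (Multiset.range L).map (fun t => f (L - 1 - t)) := by
  have hinj : Set.InjOn (fun t => L - 1 - t) (Finset.range L) := by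
    intro a ha b hb h
    simp only [Finset.coe_range, Set.mem_Iio] at ha hb
    simp only at h
    omega
  have himg : (Finset.range L).image (fun t => L - 1 - t) = Finset.range L := by
    apply Finset.eq_of_subset_of_card_le
    · intro z hz
      simp only [Finset.mem_image, Finset.mem_range] at *
      obtain ⟨w, hw, rfl⟩ := hz
      omega
    · rw [Finset.card_image_of_injOn hinj]
  have h : (Multiset.range L).map (fun t => L - 1 - t) = Multiset.range L := by
    have := congrArg Finset.val himg
    rwa [Finset.image_val_of_injOn hinj, Finset.range_val] at this
  conv_lhs => rw [← h, Multiset.map_map]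
  rfl

lemma range_cast_univ (n : ℕ) [NeZero n] :
    (Multiset.range n).map (fun k : ℕ => (k : ZMod n)) = (Finset.univ : Finset (ZMod n)).val := by
  have hinj : Set.InjOn (fun k : ℕ => (k : ZMod n)) (Finset.range n) := by
    intro a ha b hb h
    simp only [Finset.coe_range, Set.mem_Iio] at ha hb
    have := congrArg ZMod.val h
    rwa [ZMod.val_cast_of_lt ha, ZMod.val_cast_of_lt hb] at this
  have himg : (Finset.range n).image (fun k : ℕ => (k : ZMod n)) = Finset.univ := by
    apply Finset.eq_univ_of_forall
    intro z
    exact Finset.mem_image.mpr ⟨z.val, Finset.mem_range.mpr (ZMod.val_lt z),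
      ZMod.natCast_rightInverse z⟩
  have := congrArg Finset.val himg
  rwa [Finset.image_val_of_injOn hinj, Finset.range_val] at this

lemma edge_multiset (n : ℕ) (F : ZMod n → ℝ) :
    (((List.finRange n).map (fun i => F ((i : ℕ) : ZMod n))) : Multiset ℝ)
      = (Multiset.range n).map (fun k : ℕ => F (k : ZMod n)) := by
  have h : ((List.finRange n).map (fun i => F ((i : ℕ) : ZMod n)))
      = (List.range n).map (fun k : ℕ => F (k : ZMod n)) := by
    simp only [List.pure_def, List.bind_eq_flatMap]
    congr 1
    rw [← List.map_coe_finRange_eq_range, List.map_eq_flatMap]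
  rw [h, ← Multiset.coe_range]
  rfl

lemma shift_univ (n : ℕ) [NeZero n] (i₀ : ZMod n) (F : ZMod n → ℝ) :
    (Multiset.range n).map (fun k : ℕ => F (k : ZMod n))
      = (Multiset.range n).map (fun k : ℕ => F (i₀ + (k : ZMod n))) := by
  have l1 : (Multiset.range n).map (fun k : ℕ => F (k : ZMod n))
      = Multiset.map F (Finset.univ : Finset (ZMod n)).val := by
    rw [← range_cast_univ, Multiset.map_map]; rfl
  have l2 : (Multiset.range n).map (fun k : ℕ => F (i₀ + (k : ZMod n)))
      = Multiset.map (fun z => F (i₀ + z)) (Finset.univ : Finset (ZMod n)).val := by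
    rw [← range_cast_univ, Multiset.map_map]; rfl
  rw [l1, l2]
  have : Multiset.map (fun z => F (i₀ + z)) (Finset.univ : Finset (ZMod n)).val
      = Multiset.map F (Multiset.map (fun z => i₀ + z) (Finset.univ : Finset (ZMod n)).val) := by
    rw [Multiset.map_map]; rfl
  rw [this]
  congr 1
  have := Multiset.map_univ_val_equiv (Equiv.addLeft i₀ : ZMod n ≃ ZMod n)
  simpa using this.symm




lemma coord_symm (a b : ℝ) (i : Fin 2) :
    ((EuclideanSpace.equiv (Fin 2) ℝ).symm ![a, b] : E2) i = ![a, b] i := rfl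

lemma distxy : dist ((EuclideanSpace.equiv (Fin 2) ℝ).symm ![(-1:ℝ), 0] : E2)
    ((EuclideanSpace.equiv (Fin 2) ℝ).symm ![(1:ℝ), 0]) = 2 := by
  rw [EuclideanSpace.dist_eq, Fin.sum_univ_two]
  simp only [coord_symm, Real.dist_eq]
  norm_num

lemma coordsq (w : E2) (hw : ‖w‖ ≤ 1) : (w 0)^2 + (w 1)^2 ≤ 1 := by
  rw [EuclideanSpace.norm_eq, Fin.sum_univ_two, Real.norm_eq_abs, Real.norm_eq_abs] at hw
  have h0 : (0:ℝ) ≤ |w 0|^2 + |w 1|^2 := by positivity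
  nlinarith [Real.sq_sqrt h0, Real.sqrt_nonneg (|w 0|^2 + |w 1|^2), sq_abs (w 0), sq_abs (w 1)]

lemma coordeq (w v : E2) (h0 : w 0 = v 0) (h1 : w 1 = v 1) : w = v := by
  ext i
  fin_cases i <;> assumption

lemma geoX (w : E2) (hw : ‖w‖ ≤ 1)
    (hne : w ≠ (EuclideanSpace.equiv (Fin 2) ℝ).symm ![(1:ℝ), 0]) :
    dist w ((EuclideanSpace.equiv (Fin 2) ℝ).symm ![(-1:ℝ), 0]) < 2 := by
  have hsq := coordsq w hw
  have hne' : ¬ (w 0 = 1 ∧ w 1 = 0) := by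
    rintro ⟨h0, h1⟩
    exact hne (coordeq _ _ (by rw [h0, coord_symm]; norm_num) (by rw [h1, coord_symm]; norm_num))
  rw [EuclideanSpace.dist_eq, Fin.sum_univ_two]
  simp only [coord_symm, Real.dist_eq, Matrix.cons_val_zero, Matrix.cons_val_one,
    Matrix.head_cons, sq_abs]
  rw [show (2:ℝ) = Real.sqrt 4 by rw [show (4:ℝ) = 2^2 by norm_num, Real.sqrt_sq]; norm_num]
  apply Real.sqrt_lt_sqrt (by positivity)
  have hw0 : w 0 ≤ 1 := by nlinarith [sq_nonneg (w 1)]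
  rcases eq_or_lt_of_le hw0 with heq | hlt
  · have h1 : w 1 ≠ 0 := fun h => hne' ⟨heq, h⟩
    have hpos : 0 < (w 1)^2 := by positivity
    nlinarith [hpos]
  · nlinarith [sq_nonneg (w 1), abs_nonneg (w 0)]

lemma geoY (w : E2) (hw : ‖w‖ ≤ 1)
    (hne : w ≠ (EuclideanSpace.equiv (Fin 2) ℝ).symm ![(-1:ℝ), 0]) :
    dist w ((EuclideanSpace.equiv (Fin 2) ℝ).symm ![(1:ℝ), 0]) < 2 := by
  have hsq := coordsq w hw
  have hne' : ¬ (w 0 = -1 ∧ w 1 = 0) := by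
    rintro ⟨h0, h1⟩
    exact hne (coordeq _ _ (by rw [h0, coord_symm]; norm_num) (by rw [h1, coord_symm]; norm_num))
  rw [EuclideanSpace.dist_eq, Fin.sum_univ_two]
  simp only [coord_symm, Real.dist_eq, Matrix.cons_val_zero, Matrix.cons_val_one,
    Matrix.head_cons, sq_abs]
  rw [show (2:ℝ) = Real.sqrt 4 by rw [show (4:ℝ) = 2^2 by norm_num, Real.sqrt_sq]; norm_num]
  apply Real.sqrt_lt_sqrt (by positivity)
  have hw0 : -1 ≤ w 0 := by nlinarith [sq_nonneg (w 1)]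
  rcases eq_or_lt_of_le hw0 with heq | hlt
  · have h1 : w 1 ≠ 0 := fun h => hne' ⟨heq.symm, h⟩
    have hpos : 0 < (w 1)^2 := by positivity
    nlinarith [hpos]
  · nlinarith [sq_nonneg (w 1)]

lemma map_range_add {α : Type*} (f : ℕ → α) (p q : ℕ) :
    (Multiset.range (p + q)).map f
      = (Multiset.range p).map f + (Multiset.range q).map (fun t => f (p + t)) := by
  rw [Multiset.range_add, Multiset.map_add, Multiset.map_map]
  rfl


lemma range_one_map {α : Type*} (f : ℕ → α) : (Multiset.range 1).map f = {f 0} := by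
  rw [Multiset.range_succ, Multiset.range_zero, Multiset.map_cons, Multiset.map_zero]
  rfl

lemma split7 {α : Type*} (f : ℕ → α) (p q r : ℕ) :
    (Multiset.range (p + (1 + (q + (1 + (1 + (r + 1))))))).map f
    = (Multiset.range p).map f
      + ({f (p + 0)}
      + ((Multiset.range q).map (fun t => f (p + (1 + t)))
      + ({f (p + (1 + (q + 0)))}
      + ({f (p + (1 + (q + (1 + 0))))}
      + ((Multiset.range r).map (fun t => f (p + (1 + (q + (1 + (1 + t))))))
      + {f (p + (1 + (q + (1 + (1 + (r + 0))))))}))))) := by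
  rw [map_range_add, map_range_add, map_range_add, map_range_add, map_range_add,
    map_range_add, range_one_map, range_one_map, range_one_map, range_one_map]

lemma split7' {α : Type*} (f : ℕ → α) (p q r : ℕ) :
    (Multiset.range (1 + (p + (1 + (q + (1 + (r + 1))))))).map f
    = {f 0}
      + ((Multiset.range p).map (fun t => f (1 + t))
      + ({f (1 + (p + 0))}
      + ((Multiset.range q).map (fun t => f (1 + (p + (1 + t))))
      + ({f (1 + (p + (1 + (q + 0))))}
      + ((Multiset.range r).map (fun t => f (1 + (p + (1 + (q + (1 + t))))))
      + {f (1 + (p + (1 + (q + (1 + (r + 0))))))}))))) := by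
  rw [map_range_add, map_range_add, map_range_add, map_range_add, map_range_add,
    map_range_add, range_one_map, range_one_map, range_one_map, range_one_map]

lemma key_exchange (S : Finset E2) (m : ZMod S.card → E2) (hm : IsMinHamCycle S m)
    (x y : E2)
    (hx : x = (EuclideanSpace.equiv (Fin 2) ℝ).symm ![-1, 0])
    (hy : y = (EuclideanSpace.equiv (Fin 2) ℝ).symm ![1, 0])
    (i₀ : ZMod S.card) (hix : m i₀ = x) (hiy : m (i₀ + 1) = y)
    (ui uj : E2) (hui1 : ‖ui‖ ≤ 1) (huj1 : ‖uj‖ ≤ 1)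
    (ji jj : ZMod S.card) (hji : m ji = ui) (hjj : m jj = uj)
    (si sj : E2) (hsi : si = m (ji - 1)) (hsj : sj = m (jj - 1))
    (hux : ui ≠ x) (huy : ui ≠ y) (hsy : si ≠ y)
    (hvx : uj ≠ x) (hvy : uj ≠ y) (hty : sj ≠ y) (htu : sj ≠ ui)
    (hcon : dist si sj < max (max (dist si ui) (dist sj uj)) 2)
    (hab : (ji - i₀).val < (jj - i₀).val) : False := by
  obtain ⟨⟨minj, hmS⟩, hmin⟩ := hm
  have hn0 : 0 < S.card := Finset.card_pos.mpr ⟨x, hix ▸ hmS i₀⟩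
  haveI : NeZero S.card := ⟨hn0.ne'⟩
  set a := (ji - i₀).val with haa
  set b := (jj - i₀).val with hbb
  have hja : i₀ + (a : ZMod S.card) = ji := by
    rw [haa, ZMod.natCast_rightInverse (ji - i₀)]; ring
  have hjb : i₀ + (b : ZMod S.card) = jj := by
    rw [hbb, ZMod.natCast_rightInverse (jj - i₀)]; ring
  have hbn : b < S.card := ZMod.val_lt _
  have ha0 : a ≠ 0 := by
    intro h; apply hux
    rw [← hji, ← hja, h, Nat.cast_zero, add_zero, hix]
  have ha1 : a ≠ 1 := by
    intro h; apply huy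
    rw [← hji, ← hja, h, Nat.cast_one, hiy]
  have ha2 : a ≠ 2 := by
    intro h; apply hsy
    have : ji - 1 = i₀ + 1 := by
      rw [← hja, h]; push_cast; ring
    rw [hsi, this, hiy]
  have hb2 : b ≠ a + 1 := by
    intro h; apply htu
    have : jj - 1 = ji := by
      rw [← hjb, ← hja, h]; push_cast; ring
    rw [hsj, this, hji]
  obtain ⟨P, hP⟩ : ∃ P, a = P + 3 := ⟨a - 3, by omega⟩
  obtain ⟨Q, hQ⟩ : ∃ Q, b = P + Q + 5 := ⟨b - (P + 5), by omega⟩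
  obtain ⟨R, hR⟩ : ∃ R, S.card = P + Q + R + 6 := ⟨S.card - (P + Q + 6), by omega⟩
  set e := efun S.card m i₀ with he
  set c := cfun S.card m i₀ a b with hcdef
  have hψlt : ∀ t, t < S.card → psifun a b S.card t < S.card := by
    intro t ht; unfold psifun; split_ifs <;> omega
  have hψinj : ∀ t s, t < S.card → s < S.card →
      psifun a b S.card t = psifun a b S.card s → t = s := by
    intro t s ht hs h; unfold psifun at h; split_ifs at h <;> omega
  have hcinj : Function.Injective c := by
    intro z w h
    have h2 : i₀ + ((psifun a b S.card z.val : ℕ) : ZMod S.card)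
        = i₀ + ((psifun a b S.card w.val : ℕ) : ZMod S.card) := minj h
    have h3 := add_left_cancel h2
    have h4 := congrArg ZMod.val h3
    rw [ZMod.val_cast_of_lt (hψlt _ (ZMod.val_lt z)),
      ZMod.val_cast_of_lt (hψlt _ (ZMod.val_lt w))] at h4
    exact ZMod.val_injective _ (hψinj _ _ (ZMod.val_lt z) (ZMod.val_lt w) h4)
  have hHam : IsHamCycle S c := ⟨hcinj, fun z => hmS _⟩
  -- values of m at various offsets
  have hm0 : m (i₀ + ((0 : ℕ) : ZMod S.card)) = x := by
    rw [Nat.cast_zero, add_zero, hix]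
  have hm1 : m (i₀ + ((1 : ℕ) : ZMod S.card)) = y := by
    rw [Nat.cast_one, hiy]
  have hma : m (i₀ + ((a : ℕ) : ZMod S.card)) = ui := by rw [hja, hji]
  have hmb : m (i₀ + ((b : ℕ) : ZMod S.card)) = uj := by rw [hjb, hjj]
  have hma1 : m (i₀ + ((a - 1 : ℕ) : ZMod S.card)) = si := by
    rw [Nat.cast_sub (by omega : 1 ≤ a), Nat.cast_one]
    have h : i₀ + ((a : ZMod S.card) - 1) = ji - 1 := by rw [← hja]; ring
    rw [h, ← hsi]
  have hmb1 : m (i₀ + ((b - 1 : ℕ) : ZMod S.card)) = sj := by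
    rw [Nat.cast_sub (by omega : 1 ≤ b), Nat.cast_one]
    have h : i₀ + ((b : ZMod S.card) - 1) = jj - 1 := by rw [← hjb]; ring
    rw [h, ← hsj]
  have hmn : m (i₀ + ((S.card : ℕ) : ZMod S.card)) = x := by
    rw [ZMod.natCast_self, add_zero, hix]
  -- edge values
  have he0 : e 0 = dist x y := by
    rw [he]; unfold efun
    rw [show ((0:ℕ)+1 : ℕ) = 1 from rfl, hm0, hm1]
  have hea : e (P + 2) = dist si ui := by
    rw [he]; unfold efun
    rw [show (P+2+1 : ℕ) = a from by omega, show (P+2 : ℕ) = a - 1 from by omega, hma1, hma]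
  have heb : e (P + Q + 4) = dist sj uj := by
    rw [he]; unfold efun
    rw [show (P+Q+4+1 : ℕ) = b from by omega, show (P+Q+4 : ℕ) = b - 1 from by omega, hmb1, hmb]
  have hen : e (S.card - 1) = dist x (m (i₀ + ((S.card - 1 : ℕ) : ZMod S.card))) := by
    rw [he]; unfold efun
    rw [show (S.card - 1 + 1 : ℕ) = S.card from by omega, hmn, dist_comm]
  -- multiset of the distance sequences
  have hdm : ((dseq S m : List ℝ) : Multiset ℝ) = (Multiset.range S.card).map e := by
    have h0 : ((dseq S m : List ℝ) : Multiset ℝ)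
        = ↑((List.finRange S.card).map (fun i => dist (m ((i : ℕ) : ZMod S.card))
            (m (((i : ℕ) : ZMod S.card) + 1)))) :=
      Multiset.coe_eq_coe.mpr (List.perm_insertionSort _ _)
    have h1 := edge_multiset S.card (fun z => dist (m z) (m (z + 1)))
    have h2 := shift_univ S.card i₀ (fun z => dist (m z) (m (z + 1)))
    have h3 : (Multiset.range S.card).map
        (fun k : ℕ => dist (m (i₀ + (k : ZMod S.card))) (m (i₀ + (k : ZMod S.card) + 1)))
        = (Multiset.range S.card).map e := by
      apply Multiset.map_congr rfl
      intro k _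
      rw [he]; unfold efun
      congr 2
      push_cast
      ring_nf
    exact h0.trans (h1.trans (h2.trans h3))
  have hdc : ((dseq S c : List ℝ) : Multiset ℝ) = (Multiset.range S.card).map
      (fun k : ℕ => dist (c ((k : ℕ) : ZMod S.card)) (c (((k : ℕ) : ZMod S.card) + 1))) := by
    have h0 : ((dseq S c : List ℝ) : Multiset ℝ)
        = ↑((List.finRange S.card).map (fun i => dist (c ((i : ℕ) : ZMod S.card))
            (c (((i : ℕ) : ZMod S.card) + 1)))) :=
      Multiset.coe_eq_coe.mpr (List.perm_insertionSort _ _)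
    exact h0.trans (edge_multiset S.card (fun z => dist (c z) (c (z + 1))))
  -- generalized evaluation lemmas
  have ecg : ∀ k l : ℕ, k = l → e k = e l := fun k l h => by rw [h]
  have hmgen : ∀ k l : ℕ, k = l →
      m (i₀ + ((k : ℕ) : ZMod S.card)) = m (i₀ + ((l : ℕ) : ZMod S.card)) :=
    fun k l h => by rw [h]
  have eform : ∀ k l : ℕ, l = k + 1 →
      dist (m (i₀ + ((k : ℕ) : ZMod S.card))) (m (i₀ + ((l : ℕ) : ZMod S.card))) = e k := by
    intro k l h; subst h; rw [he]; rfl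
  have hm0' : ∀ k : ℕ, k = 0 → m (i₀ + ((k : ℕ) : ZMod S.card)) = x := fun k h => by
    rw [h]; exact hm0
  have hm1' : ∀ k : ℕ, k = 1 → m (i₀ + ((k : ℕ) : ZMod S.card)) = y := fun k h => by
    rw [h]; exact hm1
  have hma' : ∀ k : ℕ, k = a → m (i₀ + ((k : ℕ) : ZMod S.card)) = ui := fun k h => by
    rw [h]; exact hma
  have hmb' : ∀ k : ℕ, k = b → m (i₀ + ((k : ℕ) : ZMod S.card)) = uj := fun k h => by
    rw [h]; exact hmb
  have hma1' : ∀ k : ℕ, k = a - 1 → m (i₀ + ((k : ℕ) : ZMod S.card)) = si := fun k h => by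
    rw [h]; exact hma1
  have hmb1' : ∀ k : ℕ, k = b - 1 → m (i₀ + ((k : ℕ) : ZMod S.card)) = sj := fun k h => by
    rw [h]; exact hmb1
  -- psifun evaluation
  have hψ1 : ∀ t, t < a - 1 → psifun a b S.card t = t + 1 := by
    intro t ht; unfold psifun; rw [if_pos ht]
  have hψ2 : ∀ t, a - 1 ≤ t → t < b - 1 → psifun a b S.card t = a + b - 2 - t := by
    intro t h1 h2; unfold psifun; rw [if_neg (by omega), if_pos h2]
  have hψ3 : ∀ t, t = b - 1 → psifun a b S.card t = 0 := by
    intro t h; unfold psifun; rw [if_neg (by omega), if_neg (by omega), if_pos h]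
  have hψ4 : ∀ t, b ≤ t → psifun a b S.card t = S.card - 1 - t + b := by
    intro t h; unfold psifun; rw [if_neg (by omega), if_neg (by omega), if_neg (by omega)]
  -- evaluation of the edges of c
  have hGeval : ∀ k : ℕ, k + 1 < S.card →
      dist (c ((k : ℕ) : ZMod S.card)) (c (((k : ℕ) : ZMod S.card) + 1))
      = dist (m (i₀ + ((psifun a b S.card k : ℕ) : ZMod S.card)))
             (m (i₀ + ((psifun a b S.card (k + 1) : ℕ) : ZMod S.card))) := by
    intro k hk
    have hc1 : (((k : ℕ) : ZMod S.card) + 1) = ((k + 1 : ℕ) : ZMod S.card) := by push_cast; ring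
    rw [hc1, hcdef]; unfold cfun
    rw [ZMod.val_cast_of_lt (by omega : k < S.card), ZMod.val_cast_of_lt hk]
  have hlast : dist (c (((S.card - 1 : ℕ)) : ZMod S.card))
      (c ((((S.card - 1 : ℕ)) : ZMod S.card) + 1)) = dist uj y := by
    have h1 : ((((S.card - 1 : ℕ)) : ZMod S.card) + 1) = ((0 : ℕ) : ZMod S.card) := by
      rw [← Nat.cast_add_one, show S.card - 1 + 1 = S.card from by omega]
      rw [Nat.cast_zero, ZMod.natCast_self]
    rw [h1, hcdef]; unfold cfun
    rw [ZMod.val_cast_of_lt (by omega : S.card - 1 < S.card),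
      ZMod.val_cast_of_lt (by omega : 0 < S.card)]
    rw [hψ4 _ (by omega), hψ1 0 (by omega)]
    rw [hmb' _ (by omega), hm1' _ rfl]
  -- the multiset of edges of m, decomposed
  have hOld : (Multiset.range S.card).map e
      = ((Multiset.range (P+1)).map (fun t => e (1 + t))
          + (Multiset.range (Q+1)).map (fun t => e (a + t))
          + (Multiset.range R).map (fun t => e (b + t))
          + {e (S.card - 1)})
        + ({dist x y} + {dist si ui} + {dist sj uj}) := by
    have hrange : Multiset.range S.card
        = Multiset.range (1 + ((P+1) + (1 + ((Q+1) + (1 + (R+1)))))) := by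
      rw [show S.card = 1 + ((P+1) + (1 + ((Q+1) + (1 + (R+1))))) from by omega]
    rw [hrange, split7']
    rw [he0, ecg (1 + ((P+1) + 0)) (P+2) (by omega), hea,
      ecg (1 + ((P+1) + (1 + ((Q+1) + 0)))) (P+Q+4) (by omega), heb,
      ecg (1 + ((P+1) + (1 + ((Q+1) + (1 + (R + 0)))))) (S.card - 1) (by omega)]
    have hb2 : (Multiset.range (Q+1)).map (fun t => e (1 + ((P+1) + (1 + t))))
        = (Multiset.range (Q+1)).map (fun t => e (a + t)) := by
      apply Multiset.map_congr rfl
      intro t ht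
      exact ecg _ _ (by omega)
    have hb3 : (Multiset.range R).map (fun t => e (1 + ((P+1) + (1 + ((Q+1) + (1 + t))))))
        = (Multiset.range R).map (fun t => e (b + t)) := by
      apply Multiset.map_congr rfl
      intro t ht
      exact ecg _ _ (by omega)
    rw [hb2, hb3]
    abel
  -- the multiset of edges of c, decomposed
  have hNew : (Multiset.range S.card).map
      (fun k : ℕ => dist (c ((k : ℕ) : ZMod S.card)) (c (((k : ℕ) : ZMod S.card) + 1)))
      = ((Multiset.range (P+1)).map (fun t => e (1 + t))
          + (Multiset.range (Q+1)).map (fun t => e (a + t))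
          + (Multiset.range R).map (fun t => e (b + t))
          + {e (S.card - 1)})
        + ({dist si sj} + {dist ui x} + {dist uj y}) := by
    have hrange : Multiset.range S.card
        = Multiset.range ((P+1) + (1 + ((Q+1) + (1 + (1 + (R+1)))))) := by
      rw [show S.card = (P+1) + (1 + ((Q+1) + (1 + (1 + (R+1))))) from by omega]
    rw [hrange, split7]
    -- block 1
    have hb1 : (Multiset.range (P+1)).map
        (fun k : ℕ => dist (c ((k : ℕ) : ZMod S.card)) (c (((k : ℕ) : ZMod S.card) + 1)))
        = (Multiset.range (P+1)).map (fun t => e (1 + t)) := by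
      apply Multiset.map_congr rfl
      intro t ht
      have htP := Multiset.mem_range.mp ht
      rw [hGeval t (by omega), hψ1 t (by omega), hψ1 (t+1) (by omega)]
      exact (eform _ _ (by omega)).trans (ecg _ _ (by omega))
    -- singleton : si -- sj
    have hs1 : dist (c ((((P+1) + 0 : ℕ)) : ZMod S.card))
        (c ((((P+1) + 0 : ℕ) : ZMod S.card) + 1)) = dist si sj := by
      rw [hGeval _ (by omega), hψ1 ((P+1) + 0) (by omega),
        hψ2 ((P+1) + 0 + 1) (by omega) (by omega)]
      rw [hma1' _ (by omega), hmb1' _ (by omega)]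
    -- block 2 (reversed)
    have hb2 : (Multiset.range (Q+1)).map
        (fun t => dist (c ((((P+1) + (1 + t) : ℕ)) : ZMod S.card))
          (c ((((P+1) + (1 + t) : ℕ) : ZMod S.card) + 1)))
        = (Multiset.range (Q+1)).map (fun t => e (a + t)) := by
      have hrefl : (Multiset.range (Q+1)).map (fun t => e (a + t))
          = (Multiset.range (Q+1)).map (fun t => e (P+Q+3-t)) := by
        rw [map_range_reflect (fun t => e (a + t)) (Q+1)]
        apply Multiset.map_congr rfl
        intro t ht
        have htQ := Multiset.mem_range.mp ht
        exact ecg _ _ (by omega)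
      rw [hrefl]
      apply Multiset.map_congr rfl
      intro t ht
      have htQ := Multiset.mem_range.mp ht
      rw [hGeval _ (by omega), hψ2 ((P+1) + (1 + t)) (by omega) (by omega),
        hψ2 ((P+1) + (1 + t) + 1) (by omega) (by omega), dist_comm]
      exact (eform _ _ (by omega)).trans (ecg _ _ (by omega))
    -- singleton : ui -- x
    have hs2 : dist (c ((((P+1) + (1 + ((Q+1) + 0)) : ℕ)) : ZMod S.card))
        (c ((((P+1) + (1 + ((Q+1) + 0)) : ℕ) : ZMod S.card) + 1)) = dist ui x := by
      rw [hGeval _ (by omega), hψ2 ((P+1) + (1 + ((Q+1) + 0))) (by omega) (by omega),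
        hψ3 ((P+1) + (1 + ((Q+1) + 0)) + 1) (by omega)]
      rw [hma' _ (by omega), hm0' _ rfl]
    -- singleton : x -- (last vertex), an old edge
    have hs3 : dist (c ((((P+1) + (1 + ((Q+1) + (1 + 0))) : ℕ)) : ZMod S.card))
        (c ((((P+1) + (1 + ((Q+1) + (1 + 0))) : ℕ) : ZMod S.card) + 1)) = e (S.card - 1) := by
      rw [hGeval _ (by omega), hψ3 ((P+1) + (1 + ((Q+1) + (1 + 0)))) (by omega),
        hψ4 ((P+1) + (1 + ((Q+1) + (1 + 0))) + 1) (by omega)]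
      rw [hm0' _ rfl, hen,
        hmgen (S.card - 1 - ((P+1) + (1 + ((Q+1) + (1 + 0))) + 1) + b) (S.card - 1) (by omega)]
    -- block 3 (reversed)
    have hb3 : (Multiset.range R).map
        (fun t => dist (c ((((P+1) + (1 + ((Q+1) + (1 + (1 + t)))) : ℕ)) : ZMod S.card))
          (c ((((P+1) + (1 + ((Q+1) + (1 + (1 + t)))) : ℕ) : ZMod S.card) + 1)))
        = (Multiset.range R).map (fun t => e (b + t)) := by
      have hrefl : (Multiset.range R).map (fun t => e (b + t))
          = (Multiset.range R).map (fun t => e (S.card - 2 - t)) := by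
        rw [map_range_reflect (fun t => e (b + t)) R]
        apply Multiset.map_congr rfl
        intro t ht
        have htR := Multiset.mem_range.mp ht
        exact ecg _ _ (by omega)
      rw [hrefl]
      apply Multiset.map_congr rfl
      intro t ht
      have htR := Multiset.mem_range.mp ht
      rw [hGeval _ (by omega), hψ4 ((P+1) + (1 + ((Q+1) + (1 + (1 + t))))) (by omega),
        hψ4 ((P+1) + (1 + ((Q+1) + (1 + (1 + t)))) + 1) (by omega), dist_comm]
      exact (eform _ _ (by omega)).trans (ecg _ _ (by omega))
    -- singleton : uj -- y
    have hs4 : dist (c ((((P+1) + (1 + ((Q+1) + (1 + (1 + (R + 0))))) : ℕ)) : ZMod S.card))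
        (c ((((P+1) + (1 + ((Q+1) + (1 + (1 + (R + 0))))) : ℕ) : ZMod S.card) + 1))
        = dist uj y := by
      rw [show ((P+1) + (1 + ((Q+1) + (1 + (1 + (R + 0))))) : ℕ) = S.card - 1 from by omega]
      exact hlast
    rw [hb1, hs1, hb2, hs2, hs3, hb3, hs4]
    abel
  -- final contradiction with minimality
  have hsm : (dseq S m).Pairwise (· ≥ ·) := List.pairwise_insertionSort _ _
  have hsc : (dseq S c).Pairwise (· ≥ ·) := List.pairwise_insertionSort _ _
  set M := max (max (dist si ui) (dist sj uj)) 2 with hM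
  have hdxy : dist x y = 2 := by rw [hx, hy]; exact distxy
  have huix : dist ui x < 2 := by rw [hx]; exact geoX ui hui1 (by rw [← hy]; exact huy)
  have hujy : dist uj y < 2 := by rw [hy]; exact geoY uj huj1 (by rw [← hx]; exact hvx)
  have hMA : M ∈ ({dist x y} + {dist si ui} + {dist sj uj} : Multiset ℝ) := by
    simp only [Multiset.mem_add, Multiset.mem_singleton]
    rcases max_choice (max (dist si ui) (dist sj uj)) 2 with h | h
    · rcases max_choice (dist si ui) (dist sj uj) with h2 | h2
      · exact Or.inl (Or.inr (by rw [hM, h, h2]))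
      · exact Or.inr (by rw [hM, h, h2])
    · exact Or.inl (Or.inl (by rw [hM, h, hdxy]))
  have hB : ∀ z ∈ ({dist si sj} + {dist ui x} + {dist uj y} : Multiset ℝ), z < M := by
    intro z hz
    simp only [Multiset.mem_add, Multiset.mem_singleton] at hz
    rcases hz with (rfl | rfl) | rfl
    · exact hcon
    · exact lt_of_lt_of_le huix (le_max_right _ _)
    · exact lt_of_lt_of_le hujy (le_max_right _ _)
  apply hmin c hHam
  exact lexA _ _ hsc hsm _ _ _ M (hdc.trans hNew) (hdm.trans hOld) hMA hB (by simp)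

theorem stmt_10 (S : Finset (EuclideanSpace ℝ (Fin 2)))
    (m : ZMod S.card → EuclideanSpace ℝ (Fin 2)) (hm : IsMinHamCycle S m)
    (x y : EuclideanSpace ℝ (Fin 2))
    (hx : x = (EuclideanSpace.equiv (Fin 2) ℝ).symm ![-1, 0])
    (hy : y = (EuclideanSpace.equiv (Fin 2) ℝ).symm ![1, 0])
    (hxS : x ∈ S) (hyS : y ∈ S)
    (i₀ : ZMod S.card) (hix : m i₀ = x) (hiy : m (i₀ + 1) = y)
    (ui uj : EuclideanSpace ℝ (Fin 2))
    (huiS : ui ∈ S) (hujS : uj ∈ S)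
    (hui1 : ‖ui‖ ≤ 1) (huj1 : ‖uj‖ ≤ 1)
    (ji jj : ZMod S.card) (hji : m ji = ui) (hjj : m jj = uj)
    (si sj : EuclideanSpace ℝ (Fin 2))
    (hsi : si = m (ji - 1)) (hsj : sj = m (jj - 1))
    (hdistinct : [si, sj, ui, uj, x, y].Pairwise (· ≠ ·)) :
    dist si sj ≥ max (max (dist si ui) (dist sj uj)) 2 := by
  simp only [List.pairwise_cons, List.mem_cons, List.mem_singleton, List.not_mem_nil,
    forall_eq_or_imp, forall_eq, List.Pairwise.nil, and_true] at hdistinct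
  obtain ⟨⟨hsisj, hsiui, hsiuj, hsix, hsiy, -⟩, ⟨hsjui, hsjuj, hsjx, hsjy, -⟩,
    ⟨huiuj, huix, huiy, -⟩, ⟨hujx, hujy, -⟩, ⟨hxy, -⟩, -⟩ := hdistinct
  by_contra hcon
  push_neg at hcon
  have hn0 : 0 < S.card := Finset.card_pos.mpr ⟨x, hxS⟩
  haveI : NeZero S.card := ⟨hn0.ne'⟩
  rcases lt_trichotomy (ji - i₀).val (jj - i₀).val with h | h | h
  · exact key_exchange S m hm x y hx hy i₀ hix hiy ui uj hui1 huj1 ji jj hji hjj si sj hsi hsj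
      huix huiy hsiy hujx hujy hsjy hsjui hcon h
  · have h1 : ji - i₀ = jj - i₀ := ZMod.val_injective _ h
    have h2 : ji = jj := by
      have := congrArg (· + i₀) h1
      simpa [sub_add_cancel] using this
    exact huiuj (by rw [← hji, ← hjj, h2])
  · have hcon' : dist sj si < max (max (dist sj uj) (dist si ui)) 2 := by
      rw [dist_comm sj si, max_comm (dist sj uj)]
      exact hcon
    exact key_exchange S m hm x y hx hy i₀ hix hiy uj ui huj1 hui1 jj ji hjj hji sj si hsj hsi
      hujx hujy hsjy huix huiy hsiy hsiuj hcon' h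

end
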